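/- Let g(U) = tr(UΣUΣ) + tr(UH) + r·Σ_{i≠j} p_{ij}(u_{ij}) where p_{ij}(u) = u·sign(Ω_{ij}) if Ω_{ij} ≠ 0 and p_{ij}(u) = |u| if Ω_{ij} = 0, over symmetric matrices U, with Σ positive definite, H symmetric, r > 0. Then g is strictly convex and coercive, hence has a unique minimizer. -/

import Mathlib

open Matrix

section Stmt19Aux
variable {d : ℕ}

noncomputable def nsum (U : Matrix (Fin d) (Fin d) ℝ) : ℝ := ∑ i, ∑ j, |U i j|

noncomputable def pen (Om U : Matrix (Fin d) (Fin d) ℝ) : ℝ :=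
  ∑ i, ∑ j, if i = j then 0 else
    (if Om i j = 0 then |U i j| else U i j * Real.sign (Om i j))

noncomputable def gObj (S H Om : Matrix (Fin d) (Fin d) ℝ) (r : ℝ)
    (U : Matrix (Fin d) (Fin d) ℝ) : ℝ :=
  (U * S * U * S).trace + (U * H).trace + r * pen Om U

lemma abs_le_nsum (U : Matrix (Fin d) (Fin d) ℝ) (i j : Fin d) : |U i j| ≤ nsum U := by
  unfold nsum
  calc |U i j| ≤ ∑ j, |U i j| :=
        Finset.single_le_sum (f := fun j => |U i j|) (fun _ _ => abs_nonneg _) (Finset.mem_univ j)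
    _ ≤ ∑ i, ∑ j, |U i j| :=
        Finset.single_le_sum (f := fun i => ∑ j, |U i j|)
          (fun _ _ => Finset.sum_nonneg fun _ _ => abs_nonneg _) (Finset.mem_univ i)

lemma nsum_nonneg (U : Matrix (Fin d) (Fin d) ℝ) : 0 ≤ nsum U :=
  Finset.sum_nonneg fun _ _ => Finset.sum_nonneg fun _ _ => abs_nonneg _

lemma nsum_zero : nsum (0 : Matrix (Fin d) (Fin d) ℝ) = 0 := by simp [nsum]

lemma eq_zero_of_nsum {U : Matrix (Fin d) (Fin d) ℝ} (h : nsum U ≤ 0) : U = 0 := by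
  ext i j
  have h1 : |U i j| ≤ 0 := (abs_le_nsum U i j).trans h
  simpa using le_antisymm h1 (abs_nonneg _)

lemma nsum_smul (c : ℝ) (U : Matrix (Fin d) (Fin d) ℝ) : nsum (c • U) = |c| * nsum U := by
  simp [nsum, Matrix.smul_apply, abs_mul, Finset.mul_sum, smul_eq_mul]

lemma pen_lb (Om U : Matrix (Fin d) (Fin d) ℝ) : -(nsum U) ≤ pen Om U := by
  unfold pen nsum
  have e : -(∑ i, ∑ j, |U i j|) = ∑ i, ∑ j, -|U i j| := by simp
  rw [e]
  refine Finset.sum_le_sum fun i _ => Finset.sum_le_sum fun j _ => ?_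
  by_cases hij : i = j
  · simp [hij]
  · rw [if_neg hij]
    by_cases h0 : Om i j = 0
    · rw [if_pos h0]; linarith [abs_nonneg (U i j)]
    · rw [if_neg h0]
      have hs : |Real.sign (Om i j)| ≤ 1 := by
        rcases lt_trichotomy (Om i j) 0 with h | h | h
        · rw [Real.sign_of_neg h]; norm_num
        · exact absurd h h0
        · rw [Real.sign_of_pos h]; norm_num
      have h1 : |U i j * Real.sign (Om i j)| ≤ |U i j| := by
        rw [abs_mul]
        calc |U i j| * |Real.sign (Om i j)| ≤ |U i j| * 1 :=
              mul_le_mul_of_nonneg_left hs (abs_nonneg _)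
          _ = |U i j| := mul_one _
      linarith [neg_abs_le (U i j * Real.sign (Om i j))]

lemma pen_conv (Om : Matrix (Fin d) (Fin d) ℝ) {a b : ℝ} (ha : 0 ≤ a) (hb : 0 ≤ b)
    (x y : Matrix (Fin d) (Fin d) ℝ) :
    pen Om (a • x + b • y) ≤ a * pen Om x + b * pen Om y := by
  unfold pen
  simp only [Finset.mul_sum]
  rw [← Finset.sum_add_distrib]
  refine Finset.sum_le_sum fun i _ => ?_
  rw [← Finset.sum_add_distrib]
  refine Finset.sum_le_sum fun j _ => ?_
  have hentry : (a • x + b • y) i j = a * x i j + b * y i j := by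
    simp [Matrix.add_apply, Matrix.smul_apply, smul_eq_mul]
  by_cases hij : i = j
  · simp [hij]
  · rw [if_neg hij, if_neg hij, if_neg hij]
    by_cases h0 : Om i j = 0
    · rw [if_pos h0, if_pos h0, if_pos h0, hentry]
      calc |a * x i j + b * y i j| ≤ |a * x i j| + |b * y i j| := abs_add_le _ _
        _ = a * |x i j| + b * |y i j| := by
            rw [abs_mul, abs_mul, abs_of_nonneg ha, abs_of_nonneg hb]
    · rw [if_neg h0, if_neg h0, if_neg h0, hentry]; apply le_of_eq; ring

lemma trace_mul_sum (A B : Matrix (Fin d) (Fin d) ℝ) :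
    (A * B).trace = ∑ i, ∑ j, A i j * B j i := by
  simp [Matrix.trace, Matrix.diag, Matrix.mul_apply]

lemma lin_lb (H U : Matrix (Fin d) (Fin d) ℝ) : -(nsum H * nsum U) ≤ (U * H).trace := by
  rw [trace_mul_sum]
  have e : -(nsum H * nsum U) = ∑ i, ∑ j, -(nsum H * |U i j|) := by
    simp [nsum, Finset.mul_sum]
  rw [e]
  refine Finset.sum_le_sum fun i _ => Finset.sum_le_sum fun j _ => ?_
  have h1 : |U i j * H j i| ≤ nsum H * |U i j| := by
    rw [abs_mul, mul_comm]
    exact mul_le_mul_of_nonneg_right (abs_le_nsum H j i) (abs_nonneg _)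
  linarith [neg_abs_le (U i j * H j i)]

lemma herm_symm {A : Matrix (Fin d) (Fin d) ℝ} (h : A.IsHermitian) : A.IsSymm := by
  rw [Matrix.IsHermitian, Matrix.conjTranspose_eq_transpose_of_trivial] at h; exact h

open MatrixOrder in
lemma Qpos {S : Matrix (Fin d) (Fin d) ℝ} (hSpd : S.PosDef)
    {U : Matrix (Fin d) (Fin d) ℝ} (hU : U.IsSymm) (hne : U ≠ 0) :
    0 < (U * S * U * S).trace := by
  set s := CFC.sqrt S with hs
  have hs2 : s * s = S := CFC.sqrt_mul_sqrt_self S hSpd.posSemidef.nonneg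
  have hssym : s.IsSymm := herm_symm (CFC.sqrt_nonneg S).posSemidef.1
  have hdet : IsUnit s.det := by
    rw [isUnit_iff_ne_zero]
    intro h0
    have : S.det = 0 := by rw [← hs2, Matrix.det_mul, h0, mul_zero]
    exact hSpd.det_pos.ne' this
  clear hs
  clear_value s
  set M := s * U * s with hM
  have hMsymm : M.IsSymm := by
    rw [Matrix.IsSymm, hM, Matrix.transpose_mul, Matrix.transpose_mul, hssym.eq, hU.eq]
    rw [Matrix.mul_assoc]
  have htr : (U * S * U * S).trace = (M * M).trace := by
    have h1 : U * S * U * S = (U * s) * (s * U * s) * s := by rw [← hs2]; noncomm_ring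
    rw [h1, Matrix.trace_mul_cycle]
    congr 1
    rw [hM]; noncomm_ring
  have hMne : M ≠ 0 := by
    intro h0
    apply hne
    have h1 : s⁻¹ * M * s⁻¹ = U := by
      rw [hM]
      rw [Matrix.mul_assoc, Matrix.mul_assoc, Matrix.mul_nonsing_inv _ hdet, Matrix.mul_one,
        ← Matrix.mul_assoc, Matrix.nonsing_inv_mul _ hdet, Matrix.one_mul]
    rw [← h1, h0, Matrix.mul_zero, Matrix.zero_mul]
  rw [htr, trace_mul_sum]
  have hsum : ∑ i, ∑ j, M i j * M j i = ∑ i, ∑ j, (M i j)^2 := by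
    apply Finset.sum_congr rfl; intro i _; apply Finset.sum_congr rfl; intro j _
    rw [hMsymm.apply, pow_two]
  rw [hsum]
  have : ∃ i j, M i j ≠ 0 := by
    by_contra h
    push_neg at h
    exact hMne (by ext i j; exact h i j)
  obtain ⟨i, j, hij⟩ := this
  have hpos : (0:ℝ) < (M i j)^2 := by positivity
  calc (0:ℝ) < (M i j)^2 := hpos
    _ ≤ ∑ j, (M i j)^2 :=
        Finset.single_le_sum (f := fun j => (M i j)^2) (fun k _ => sq_nonneg _) (Finset.mem_univ j)
    _ ≤ ∑ i, ∑ j, (M i j)^2 :=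
        Finset.single_le_sum (f := fun i => ∑ j, (M i j)^2)
          (fun k _ => Finset.sum_nonneg fun l _ => sq_nonneg _) (Finset.mem_univ i)

lemma Tsym (S A B : Matrix (Fin d) (Fin d) ℝ) :
    (A * S * B * S).trace = (B * S * A * S).trace := by
  rw [Matrix.mul_assoc, Matrix.trace_mul_comm, ← Matrix.mul_assoc]

lemma Texpand (S : Matrix (Fin d) (Fin d) ℝ) (a b : ℝ) (x y : Matrix (Fin d) (Fin d) ℝ) :
    ((a•x+b•y) * S * (a•x+b•y) * S).trace
      = a*a*(x*S*x*S).trace + 2*(a*b)*(x*S*y*S).trace + b*b*(y*S*y*S).trace := by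
  have h : (a•x+b•y) * S * (a•x+b•y) * S
      = (a*a)•(x*S*x*S) + (a*b)•(x*S*y*S) + (a*b)•(y*S*x*S) + (b*b)•(y*S*y*S) := by
    simp only [Matrix.add_mul, Matrix.mul_add, smul_mul_assoc, mul_smul_comm, smul_smul,
      smul_add, Matrix.mul_assoc]
    module
  rw [h]
  simp only [Matrix.trace_add, Matrix.trace_smul, smul_eq_mul]
  rw [Tsym S y x]
  ring

lemma Qsub (S x y : Matrix (Fin d) (Fin d) ℝ) :
    ((x-y)*S*(x-y)*S).trace
      = (x*S*x*S).trace - 2*(x*S*y*S).trace + (y*S*y*S).trace := by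
  have h : x - y = (1:ℝ)•x + (-1:ℝ)•y := by module
  rw [h, Texpand]; ring

lemma Qsmul (S : Matrix (Fin d) (Fin d) ℝ) (c : ℝ) (A : Matrix (Fin d) (Fin d) ℝ) :
    ((c•A)*S*(c•A)*S).trace = c^2 * (A*S*A*S).trace := by
  have h : c•A = c•A + (0:ℝ)•A := by module
  rw [h, Texpand]; ring

lemma continuous_nsum : Continuous (nsum (d := d)) := by
  unfold nsum
  exact continuous_finset_sum _ fun i _ => continuous_finset_sum _ fun j _ =>
    (continuous_id.matrix_elem i j).abs

lemma continuous_quad (S : Matrix (Fin d) (Fin d) ℝ) :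
    Continuous fun U : Matrix (Fin d) (Fin d) ℝ => (U * S * U * S).trace :=
  (((continuous_id.matrix_mul continuous_const).matrix_mul
    continuous_id).matrix_mul continuous_const).matrix_trace

lemma continuous_gObj (S H Om : Matrix (Fin d) (Fin d) ℝ) (r : ℝ) :
    Continuous (gObj S H Om r) := by
  unfold gObj pen
  refine ((continuous_quad S).add
    ((continuous_id.matrix_mul continuous_const).matrix_trace)).add
    (continuous_const.mul ?_)
  refine continuous_finset_sum _ fun i _ => continuous_finset_sum _ fun j _ => ?_
  split_ifs with h1 h2
  · exact continuous_const
  · exact (continuous_id.matrix_elem i j).abs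
  · exact (continuous_id.matrix_elem i j).mul continuous_const

lemma isClosed_sym : IsClosed {U : Matrix (Fin d) (Fin d) ℝ | U.IsSymm} := by
  have h : {U : Matrix (Fin d) (Fin d) ℝ | U.IsSymm} = ⋂ i, ⋂ j, {U | U j i = U i j} := by
    ext U; simp [Matrix.IsSymm.ext_iff]
  rw [h]
  exact isClosed_iInter fun i => isClosed_iInter fun j =>
    isClosed_eq (continuous_id.matrix_elem j i) (continuous_id.matrix_elem i j)

lemma compact_of_closed_bdd {s : Set (Matrix (Fin d) (Fin d) ℝ)} (hc : IsClosed s)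
    {R : ℝ} (hb : ∀ U ∈ s, nsum U ≤ R) : IsCompact s := by
  have hbig : IsCompact (Set.univ.pi fun _ : Fin d => Set.univ.pi fun _ : Fin d => Set.Icc (-R) R :
      Set (Matrix (Fin d) (Fin d) ℝ)) :=
    isCompact_univ_pi fun i => isCompact_univ_pi fun j => isCompact_Icc
  refine hbig.of_isClosed_subset hc ?_
  intro U hU i _ j _
  exact abs_le.1 ((abs_le_nsum U i j).trans (hb U hU))

lemma exists_min (f : Matrix (Fin d) (Fin d) ℝ → ℝ) (hf : Continuous f)
    (R : ℝ) (hR : 0 ≤ R) :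
    ∃ U₀ : Matrix (Fin d) (Fin d) ℝ, (U₀.IsSymm ∧ nsum U₀ ≤ R) ∧
      ∀ U : Matrix (Fin d) (Fin d) ℝ, U.IsSymm → nsum U ≤ R → f U₀ ≤ f U := by
  set K := {U : Matrix (Fin d) (Fin d) ℝ | U.IsSymm ∧ nsum U ≤ R} with hK
  have hKcl : IsClosed K := by
    have : K = {U : Matrix (Fin d) (Fin d) ℝ | U.IsSymm} ∩ {U | nsum U ≤ R} := rfl
    rw [this]
    exact isClosed_sym.inter (isClosed_le continuous_nsum continuous_const)
  have hKc : IsCompact K := compact_of_closed_bdd hKcl (fun U hU => hU.2)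
  have hKne : K.Nonempty := ⟨0, Matrix.isSymm_zero, by rw [nsum_zero]; exact hR⟩
  obtain ⟨U₀, hU₀K, hmin⟩ := hKc.exists_isMinOn hKne hf.continuousOn
  exact ⟨U₀, hU₀K, fun U h1 h2 => hmin (Set.mem_setOf_eq ▸ ⟨h1, h2⟩)⟩

lemma quad_lower (S : Matrix (Fin d) (Fin d) ℝ) (hSpd : S.PosDef) :
    ∃ c₀ > 0, ∀ U : Matrix (Fin d) (Fin d) ℝ, U.IsSymm →
      c₀ * (nsum U)^2 ≤ (U*S*U*S).trace := by
  rcases Nat.eq_zero_or_pos d with hd | hd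
  · subst hd
    exact ⟨1, one_pos, fun U hU => by simp [nsum, Matrix.trace]⟩
  · set K := {U : Matrix (Fin d) (Fin d) ℝ | U.IsSymm ∧ nsum U = 1} with hK
    have hKcl : IsClosed K := by
      have : K = {U : Matrix (Fin d) (Fin d) ℝ | U.IsSymm} ∩ {U | nsum U = 1} := rfl
      rw [this]
      exact isClosed_sym.inter (isClosed_eq continuous_nsum continuous_const)
    have hKc : IsCompact K := compact_of_closed_bdd hKcl (fun U hU => hU.2.le)
    have hdne : ((d:ℝ) * d) ≠ 0 := by positivity
    have hKne : K.Nonempty := by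
      refine ⟨Matrix.of fun _ _ => ((d:ℝ) * d)⁻¹, Matrix.IsSymm.ext fun i j => rfl, ?_⟩
      have hpos : (0:ℝ) ≤ ((d:ℝ) * d)⁻¹ := by positivity
      simp only [nsum, Matrix.of_apply, abs_of_nonneg hpos, Finset.sum_const,
        Finset.card_univ, Fintype.card_fin, nsmul_eq_mul]
      field_simp
    obtain ⟨U₀, hU₀K, hmin⟩ := hKc.exists_isMinOn hKne (continuous_quad S).continuousOn
    have hU₀ne : U₀ ≠ 0 := by
      intro h0
      have h2 := hU₀K.2
      rw [h0, nsum_zero] at h2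
      exact one_ne_zero h2.symm
    have hc₀ : 0 < (U₀*S*U₀*S).trace := Qpos hSpd hU₀K.1 hU₀ne
    refine ⟨(U₀*S*U₀*S).trace, hc₀, fun U hU => ?_⟩
    by_cases hU0 : U = 0
    · subst hU0
      simp [nsum_zero]
    · set t := nsum U with ht
      have ht0 : 0 < t := by
        rcases lt_or_eq_of_le (nsum_nonneg U) with h | h
        · exact h
        · exact absurd (eq_zero_of_nsum h.ge) hU0
      have hV : (t⁻¹ • U) ∈ K := by
        refine ⟨hU.smul _, ?_⟩
        rw [nsum_smul, abs_of_nonneg (inv_nonneg.mpr ht0.le), ← ht, inv_mul_cancel₀ ht0.ne']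
      have h1 : (U₀*S*U₀*S).trace ≤ ((t⁻¹•U)*S*(t⁻¹•U)*S).trace := hmin hV
      rw [Qsmul] at h1
      have h3 : (U₀*S*U₀*S).trace * t^2 ≤ (t⁻¹)^2 * (U*S*U*S).trace * t^2 :=
        mul_le_mul_of_nonneg_right h1 (sq_nonneg t)
      have h4 : (t⁻¹)^2 * (U*S*U*S).trace * t^2 = (U*S*U*S).trace := by
        field_simp
      rw [h4] at h3
      linarith

end Stmt19Aux

section Stmt19Main
variable {d : ℕ}

lemma part1 (S H Om : Matrix (Fin d) (Fin d) ℝ) (hSpd : S.PosDef) (r : ℝ) (hr : 0 < r) :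
    StrictConvexOn ℝ {U : Matrix (Fin d) (Fin d) ℝ | U.IsSymm} (gObj S H Om r) := by
  constructor
  · intro x hx y hy a b ha hb hab
    exact Matrix.IsSymm.add (Matrix.IsSymm.smul hx a) (Matrix.IsSymm.smul hy b)
  · intro x hx y hy hne a b ha hb hab
    simp only [smul_eq_mul]
    unfold gObj
    have hx' : x.IsSymm := hx
    have hy' : y.IsSymm := hy
    have hde := Qsub S x y
    have hdpos : 0 < ((x-y)*S*(x-y)*S).trace :=
      Qpos hSpd (hx'.sub hy') (sub_ne_zero.mpr hne)
    have hQe := Texpand S a b x y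
    have hL : ((a•x+b•y) * H).trace = a * (x*H).trace + b * (y*H).trace := by
      simp [Matrix.add_mul, smul_mul_assoc, Matrix.trace_add, Matrix.trace_smul, smul_eq_mul]
    have hPc := pen_conv Om ha.le hb.le x y
    have hrP : r * pen Om (a•x+b•y) ≤ r * (a * pen Om x + b * pen Om y) :=
      mul_le_mul_of_nonneg_left hPc hr.le
    rw [hQe, hL]
    have hb' : b = 1 - a := by linarith
    have key : a * (x*S*x*S).trace + b * (y*S*y*S).trace -
        (a*a*(x*S*x*S).trace + 2*(a*b)*(x*S*y*S).trace + b*b*(y*S*y*S).trace)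
        = (a*b) * (((x-y)*S*(x-y)*S).trace) := by
      rw [hde, hb']; ring
    have habD : 0 < (a*b) * (((x-y)*S*(x-y)*S).trace) :=
      mul_pos (mul_pos ha hb) hdpos
    nlinarith [key, habD, hrP]

lemma part2 (S H Om : Matrix (Fin d) (Fin d) ℝ) (hSpd : S.PosDef) (r : ℝ) (hr : 0 < r) :
    ∀ c : ℝ, ∃ R : ℝ, ∀ U : Matrix (Fin d) (Fin d) ℝ, U.IsSymm →
      R ≤ nsum U → c ≤ gObj S H Om r U := by
  obtain ⟨c₀, hc₀, hQ⟩ := quad_lower S hSpd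
  have hM : 0 ≤ nsum H := nsum_nonneg H
  intro c
  refine ⟨(|c| + nsum H + r + 1)/c₀ + 1, fun U hU hR => ?_⟩
  set t := nsum U with ht
  have ht0 : 0 ≤ t := nsum_nonneg U
  have h1 : c₀ * t^2 ≤ (U*S*U*S).trace := hQ U hU
  have h2 : -(nsum H * t) ≤ (U*H).trace := lin_lb H U
  have h3 : -t ≤ pen Om U := pen_lb Om U
  have h4 : r * (-t) ≤ r * pen Om U := mul_le_mul_of_nonneg_left h3 hr.le
  have hnum : 0 ≤ (|c| + nsum H + r + 1)/c₀ := by positivity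
  have ht1 : 1 ≤ t := by linarith
  have h5 : c₀ * ((|c| + nsum H + r + 1)/c₀ + 1) = |c| + nsum H + r + 1 + c₀ := by
    field_simp
  have hRt : ((|c| + nsum H + r + 1)/c₀ + 1) * t ≤ t * t :=
    mul_le_mul_of_nonneg_right hR ht0
  have h6 : c₀ * (((|c| + nsum H + r + 1)/c₀ + 1) * t) ≤ c₀ * (t * t) :=
    mul_le_mul_of_nonneg_left hRt hc₀.le
  have h7 : c₀ * (((|c| + nsum H + r + 1)/c₀ + 1) * t) = (|c| + nsum H + r + 1 + c₀) * t := by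
    rw [← mul_assoc, h5]
  unfold gObj
  have h8 : c ≤ |c| := le_abs_self c
  nlinarith [mul_nonneg (by positivity : (0:ℝ) ≤ |c| + 1 + c₀) (by linarith : (0:ℝ) ≤ t - 1),
    sq_nonneg t, pow_two t]

lemma part3 (S H Om : Matrix (Fin d) (Fin d) ℝ) (hSpd : S.PosDef) (r : ℝ) (hr : 0 < r) :
    ∃! U : Matrix (Fin d) (Fin d) ℝ, U.IsSymm ∧
      ∀ V : Matrix (Fin d) (Fin d) ℝ, V.IsSymm → gObj S H Om r U ≤ gObj S H Om r V := by
  have hcont := continuous_gObj S H Om r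
  obtain ⟨R, hR⟩ := part2 S H Om hSpd r hr (gObj S H Om r 0 + 1)
  obtain ⟨U₀, ⟨hU₀s, hU₀n⟩, hmin⟩ := exists_min (gObj S H Om r) hcont (max R 0) (le_max_right _ _)
  have h0K : nsum (0 : Matrix (Fin d) (Fin d) ℝ) ≤ max R 0 := by
    rw [nsum_zero]; exact le_max_right _ _
  have hopt : ∀ V : Matrix (Fin d) (Fin d) ℝ, V.IsSymm →
      gObj S H Om r U₀ ≤ gObj S H Om r V := by
    intro V hV
    rcases le_or_gt (nsum V) (max R 0) with h | h
    · exact hmin V hV h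
    · have h1 : gObj S H Om r 0 + 1 ≤ gObj S H Om r V :=
        hR V hV ((le_max_left R 0).trans h.le)
      have h2 : gObj S H Om r U₀ ≤ gObj S H Om r 0 := hmin 0 Matrix.isSymm_zero h0K
      linarith
  refine ⟨U₀, ⟨hU₀s, hopt⟩, ?_⟩
  rintro V ⟨hVs, hVopt⟩
  by_contra hne
  have hVmem : V ∈ {U : Matrix (Fin d) (Fin d) ℝ | U.IsSymm} := hVs
  have hU₀mem : U₀ ∈ {U : Matrix (Fin d) (Fin d) ℝ | U.IsSymm} := hU₀s
  have hsc := (part1 S H Om hSpd r hr).2 hVmem hU₀mem hne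
    (by norm_num : (0:ℝ) < 1/2) (by norm_num : (0:ℝ) < 1/2) (by norm_num)
  have hmidsym : ((1/2:ℝ)•V + (1/2:ℝ)•U₀).IsSymm :=
    Matrix.IsSymm.add (hVs.smul _) (hU₀s.smul _)
  have h1 : gObj S H Om r V ≤ gObj S H Om r ((1/2:ℝ)•V + (1/2:ℝ)•U₀) := hVopt _ hmidsym
  have h2 : gObj S H Om r U₀ ≤ gObj S H Om r V := hopt V hVs
  have h3 : gObj S H Om r V ≤ gObj S H Om r U₀ := hVopt U₀ hU₀s
  rw [smul_eq_mul, smul_eq_mul] at hsc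
  linarith

end Stmt19Main

/-- With Σ positive definite, H symmetric, r > 0, the limiting
objective g(U) = tr(UΣUΣ) + tr(UH) + r·Σ_{i≠j} p_{ij}(u_{ij}), where
p_{ij}(u) = u·sign(Ω_{ij}) if Ω_{ij} ≠ 0 and |u| otherwise, is strictly convex
and coercive on the subspace of symmetric matrices, hence has a unique
minimizer there. -/
theorem stmt19 {d : ℕ} (S H Om : Matrix (Fin d) (Fin d) ℝ)
    (hSs : S.IsSymm) (hSpd : S.PosDef) (hH : H.IsSymm) (hOm : Om.IsSymm)
    (r : ℝ) (hr : 0 < r) :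
    StrictConvexOn ℝ {U : Matrix (Fin d) (Fin d) ℝ | U.IsSymm}
      (fun U => (U * S * U * S).trace + (U * H).trace +
        r * ∑ i, ∑ j, if i = j then 0 else
          (if Om i j = 0 then |U i j| else U i j * Real.sign (Om i j))) ∧
    (∀ c : ℝ, ∃ R : ℝ, ∀ U : Matrix (Fin d) (Fin d) ℝ, U.IsSymm →
      R ≤ ∑ i, ∑ j, |U i j| →
      c ≤ (U * S * U * S).trace + (U * H).trace +
        r * ∑ i, ∑ j, if i = j then 0 else
          (if Om i j = 0 then |U i j| else U i j * Real.sign (Om i j))) ∧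
    (∃! U : Matrix (Fin d) (Fin d) ℝ, U.IsSymm ∧
      ∀ V : Matrix (Fin d) (Fin d) ℝ, V.IsSymm →
        (U * S * U * S).trace + (U * H).trace +
          r * ∑ i, ∑ j, (if i = j then 0 else
            (if Om i j = 0 then |U i j| else U i j * Real.sign (Om i j))) ≤
        (V * S * V * S).trace + (V * H).trace +
          r * ∑ i, ∑ j, (if i = j then 0 else
            (if Om i j = 0 then |V i j| else V i j * Real.sign (Om i j)))) := by
  refine ⟨?_, ?_, ?_⟩
  · exact part1 S H Om hSpd r hr
  · exact part2 S H Om hSpd r hr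
  · exact part3 S H Om hSpd r hr
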